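/- Let A, B be rings and M an (A,B)-bimodule. The full subcategory 𝓜(A-Mod, M, B-Mod) of Rep(A,M,B) — consisting of all triples (X,Y,φ) with φ : M⊗_B Y → X injective — is a resolving subcategory of Rep(A,M,B) if and only if M is a flat right B-module. -/

import Mathlib

set_option linter.unusedSectionVars false

open MulOpposite

universe u

section RepT

variable (A B M : Type u) [Ring A] [Ring B]
  [AddCommGroup M] [Module A M] [Module Bᵐᵒᵖ M] [SMulCommClass A Bᵐᵒᵖ M]

/-- Data exhibiting an `A`-module `T` as the tensor product `M ⊗_B Y` of the
`(A,B)`-bimodule `M` with a left `B`-module `Y`, i.e. a `B`-balanced, `A`-compatible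
biadditive map `τ : M × Y → T` which is universal among such maps. -/
structure TensorData (Y : Type u) [AddCommGroup Y] [Module B Y] where
  T : Type u
  [addT : AddCommGroup T]
  [modT : Module A T]
  τ : M → Y → T
  add_left : ∀ m m' y, τ (m + m') y = τ m y + τ m' y
  add_right : ∀ m y y', τ m (y + y') = τ m y + τ m y'
  balanced : ∀ (b : B) m y, τ (op b • m) y = τ m (b • y)
  smul_left : ∀ (a : A) m y, τ (a • m) y = a • τ m y
  universal : ∀ (Z : Type u) [AddCommGroup Z] [Module A Z] (β : M → Y → Z),
    (∀ m m' y, β (m + m') y = β m y + β m' y) →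
    (∀ m y y', β m (y + y') = β m y + β m y') →
    (∀ (b : B) m y, β (op b • m) y = β m (b • y)) →
    (∀ (a : A) m y, β (a • m) y = a • β m y) →
    ∃! h : T →ₗ[A] Z, ∀ m y, h (τ m y) = β m y

attribute [instance] TensorData.addT TensorData.modT

/-- An object of the category `Rep(A,M,B)` (equivalent to the category of left modules
over the triangular matrix ring `[[A,M],[0,B]]`): a triple `(X, Y, φ)` where `X` is a
left `A`-module, `Y` a left `B`-module and `φ : M ⊗_B Y → X` is `A`-linear; the tensor
product `M ⊗_B Y` is recorded via its universal property. -/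
structure RepObj where
  X : Type u
  [addX : AddCommGroup X]
  [modX : Module A X]
  Y : Type u
  [addY : AddCommGroup Y]
  [modY : Module B Y]
  td : TensorData A B M Y
  φ : td.T →ₗ[A] X

attribute [instance] RepObj.addX RepObj.modX RepObj.addY RepObj.modY

variable {A B M}

/-- A morphism of `Rep(A,M,B)`: a pair `(f, g)` with `f ∘ φ₁ = φ₂ ∘ (1_M ⊗ g)`. -/
structure RepHom (T₁ T₂ : RepObj A B M) where
  f : T₁.X →ₗ[A] T₂.X
  g : T₁.Y →ₗ[B] T₂.Y
  comm : ∀ m y, f (T₁.φ (T₁.td.τ m y)) = T₂.φ (T₂.td.τ m (g y))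

/-- A short exact sequence in `Rep(A,M,B)` (exactness is componentwise). -/
structure RepSES (T₁ T₂ T₃ : RepObj A B M) where
  i : RepHom T₁ T₂
  p : RepHom T₂ T₃
  inj_f : Function.Injective i.f
  inj_g : Function.Injective i.g
  surj_f : Function.Surjective p.f
  surj_g : Function.Surjective p.g
  exact_f : LinearMap.range i.f = LinearMap.ker p.f
  exact_g : LinearMap.range i.g = LinearMap.ker p.g

/-- `P` is a projective object of `Rep(A,M,B)`: every morphism from `P` lifts along
every epimorphism (epimorphisms are the componentwise surjective morphisms). -/
def RepObj.IsProjObj (P : RepObj A B M) : Prop :=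
  ∀ (T₁ T₂ : RepObj A B M) (u : RepHom T₁ T₂),
    Function.Surjective u.f → Function.Surjective u.g →
    ∀ h : RepHom P T₂, ∃ h' : RepHom P T₁,
      (∀ x, u.f (h'.f x) = h.f x) ∧ (∀ y, u.g (h'.g y) = h.g y)

end RepT

section Resolving

variable {A B M : Type u} [Ring A] [Ring B]
  [AddCommGroup M] [Module A M] [Module Bᵐᵒᵖ M] [SMulCommClass A Bᵐᵒᵖ M]

/-- A predicate `P` on objects of `Rep(A,M,B)` defines a resolving subcategory:
it holds for all projective objects and is closed under direct summands, extensions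
and kernels of epimorphisms. -/
def RepResolving (P : RepObj A B M → Prop) : Prop :=
  (∀ T : RepObj A B M, T.IsProjObj → P T) ∧
  (∀ T₁ T₂ : RepObj A B M, P T₂ →
    (∃ (s : RepHom T₁ T₂) (r : RepHom T₂ T₁),
      (∀ x, r.f (s.f x) = x) ∧ (∀ y, r.g (s.g y) = y)) → P T₁) ∧
  (∀ (T₁ T₂ T₃ : RepObj A B M), RepSES T₁ T₂ T₃ → P T₁ → P T₃ → P T₂) ∧
  (∀ (T₁ T₂ T₃ : RepObj A B M), RepSES T₁ T₂ T₃ → P T₂ → P T₃ → P T₁)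

variable (A B M) in
/-- `M` is a flat right `B`-module: tensoring with `M` over `B` preserves injectivity
of `B`-linear maps (expressed via tensor products given by their universal property). -/
def MIsFlat : Prop :=
  ∀ (Y₁ Y₂ : Type u) [AddCommGroup Y₁] [Module B Y₁] [AddCommGroup Y₂] [Module B Y₂]
    (g : Y₁ →ₗ[B] Y₂), Function.Injective g →
    ∀ (D₁ : TensorData A B M Y₁) (D₂ : TensorData A B M Y₂) (h : D₁.T →ₗ[A] D₂.T),
      (∀ m y, h (D₁.τ m y) = D₂.τ m (g y)) → Function.Injective h

namespace TensorData

variable {Y Y' : Type u} [AddCommGroup Y] [Module B Y] [AddCommGroup Y'] [Module B Y']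

/-- Two linear maps out of a tensor data agreeing on the image of `τ` are equal. -/
theorem ext_lin (D : TensorData A B M Y) {Z : Type u} [AddCommGroup Z] [Module A Z]
    (h k : D.T →ₗ[A] Z) (H : ∀ m y, h (D.τ m y) = k (D.τ m y)) : h = k := by
  obtain ⟨h0, _, huniq⟩ := D.universal Z (fun m y => h (D.τ m y))
    (fun m m' y => by simp only [D.add_left, map_add])
    (fun m y y' => by simp only [D.add_right, map_add])
    (fun b m y => by simp only [D.balanced])
    (fun a m y => by simp only [D.smul_left, map_smul])
  rw [huniq h (fun m y => rfl), huniq k (fun m y => (H m y).symm)]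

theorem tau_zero_right (D : TensorData A B M Y) (m : M) : D.τ m 0 = 0 := by
  have h := D.add_right m 0 0
  rw [add_zero] at h
  exact (left_eq_add.mp h)

/-- A submodule containing the image of `τ` is everything. -/
theorem eq_top_of_tau_mem (D : TensorData A B M Y) (N : Submodule A D.T)
    (hN : ∀ m y, D.τ m y ∈ N) : N = ⊤ := by
  have h0 : N.mkQ = (0 : D.T →ₗ[A] D.T ⧸ N) :=
    D.ext_lin N.mkQ 0 (fun m y => by
      rw [LinearMap.zero_apply]
      exact (Submodule.Quotient.mk_eq_zero N).2 (hN m y))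
  rw [← Submodule.ker_mkQ N, h0, LinearMap.ker_zero]

/-- The map induced on tensor data by a `B`-linear map. -/
noncomputable def map (D : TensorData A B M Y) (D' : TensorData A B M Y')
    (g : Y →ₗ[B] Y') : D.T →ₗ[A] D'.T :=
  (D.universal D'.T (fun m y => D'.τ m (g y))
    (fun m m' y => by simp only [D'.add_left])
    (fun m y y' => by simp only [map_add, D'.add_right])
    (fun b m y => by simp only [D'.balanced, map_smul])
    (fun a m y => by simp only [D'.smul_left])).choose

theorem map_tau (D : TensorData A B M Y) (D' : TensorData A B M Y') (g : Y →ₗ[B] Y')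
    (m : M) (y : Y) : D.map D' g (D.τ m y) = D'.τ m (g y) :=
  (D.universal D'.T (fun m y => D'.τ m (g y))
    (fun m m' y => by simp only [D'.add_left])
    (fun m y y' => by simp only [map_add, D'.add_right])
    (fun b m y => by simp only [D'.balanced, map_smul])
    (fun a m y => by simp only [D'.smul_left])).choose_spec.1 m y

theorem map_surjective (D : TensorData A B M Y) (D' : TensorData A B M Y')
    (g : Y →ₗ[B] Y') (hg : Function.Surjective g) :
    Function.Surjective (D.map D' g) := by
  rw [← LinearMap.range_eq_top]
  apply D'.eq_top_of_tau_mem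
  intro m y'
  obtain ⟨y, rfl⟩ := hg y'
  exact ⟨D.τ m y, D.map_tau D' g m y⟩

theorem map_map_eq_id (D : TensorData A B M Y) (D' : TensorData A B M Y')
    (g : Y →ₗ[B] Y') (g' : Y' →ₗ[B] Y) (hgg : ∀ y, g' (g y) = y) (t : D.T) :
    D'.map D g' (D.map D' g t) = t := by
  have h := D.ext_lin ((D'.map D g') ∘ₗ (D.map D' g)) LinearMap.id
    (fun m y => by
      rw [LinearMap.comp_apply, D.map_tau, D'.map_tau, hgg, LinearMap.id_apply])
  exact DFunLike.congr_fun h t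

/-- Middle exactness of the tensored sequence (right exactness of `M ⊗_B -`). -/
theorem middle_exact {Y₁ Y₂ Y₃ : Type u} [AddCommGroup Y₁] [Module B Y₁]
    [AddCommGroup Y₂] [Module B Y₂] [AddCommGroup Y₃] [Module B Y₃]
    (D₁ : TensorData A B M Y₁) (D₂ : TensorData A B M Y₂) (D₃ : TensorData A B M Y₃)
    (gi : Y₁ →ₗ[B] Y₂) (gp : Y₂ →ₗ[B] Y₃) (hsurj : Function.Surjective gp)
    (hex : LinearMap.range gi = LinearMap.ker gp)
    {t : D₂.T} (ht : D₂.map D₃ gp t = 0) :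
    t ∈ LinearMap.range (D₁.map D₂ gi) := by
  set N := LinearMap.range (D₁.map D₂ gi) with hNdef
  set π := N.mkQ with hπdef
  have key : ∀ (m : M) (u v : Y₂), gp u = gp v → π (D₂.τ m u) = π (D₂.τ m v) := by
    intro m u v huv
    have hmem : u - v ∈ LinearMap.ker gp := by
      rw [LinearMap.mem_ker, map_sub, huv, sub_self]
    rw [← hex] at hmem
    obtain ⟨y₁, hy₁⟩ := hmem
    have hsum : D₂.τ m u = D₂.τ m v + D₂.τ m (gi y₁) := by
      rw [← D₂.add_right, hy₁]; congr 1; abel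
    rw [hsum, map_add]
    have : π (D₂.τ m (gi y₁)) = 0 := by
      rw [← D₁.map_tau D₂ gi m y₁]
      exact (Submodule.Quotient.mk_eq_zero N).2 ⟨D₁.τ m y₁, rfl⟩
    rw [this, add_zero]
  set σ := Function.surjInv hsurj with hσdef
  have hσ : ∀ y₃, gp (σ y₃) = y₃ := fun y₃ => Function.surjInv_eq hsurj y₃
  set β : M → Y₃ → (D₂.T ⧸ N) := fun m y₃ => π (D₂.τ m (σ y₃)) with hβdef
  have hβeq : ∀ (m : M) (u : Y₂), β m (gp u) = π (D₂.τ m u) := by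
    intro m u; exact key m (σ (gp u)) u (hσ (gp u))
  obtain ⟨k, hk, -⟩ := D₃.universal (D₂.T ⧸ N) β
    (fun m m' y => by simp only [hβdef, D₂.add_left, map_add])
    (fun m y y' => by
      have h1 : gp (σ y + σ y') = y + y' := by rw [map_add, hσ, hσ]
      rw [show β m (y + y') = β m (gp (σ y + σ y')) by rw [h1], hβeq,
        D₂.add_right, map_add])
    (fun b m y => by
      have h1 : gp (b • σ y) = b • y := by rw [map_smul, hσ]
      rw [hβdef]
      show π (D₂.τ (op b • m) (σ y)) = π (D₂.τ m (σ (b • y)))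
      rw [D₂.balanced, ← hβeq, show gp (b • σ y) = b • y from h1]
    )
    (fun a m y => by simp only [hβdef, D₂.smul_left, map_smul])
  have hcomp : k ∘ₗ (D₂.map D₃ gp) = π :=
    D₂.ext_lin _ _ (fun m y => by
      rw [LinearMap.comp_apply, D₂.map_tau, hk, hβeq])
  have : π t = 0 := by
    rw [← hcomp, LinearMap.comp_apply, ht, map_zero]
  exact (Submodule.Quotient.mk_eq_zero N).1 this

end TensorData

/-- Compatibility of a morphism with the induced map on tensor data. -/
theorem RepHom.compat {T₁ T₂ : RepObj A B M} (u : RepHom T₁ T₂) (t : T₁.td.T) :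
    u.f (T₁.φ t) = T₂.φ (T₁.td.map T₂.td u.g t) := by
  have h := T₁.td.ext_lin (u.f ∘ₗ T₁.φ) (T₂.φ ∘ₗ T₁.td.map T₂.td u.g)
    (fun m y => by
      rw [LinearMap.comp_apply, LinearMap.comp_apply, T₁.td.map_tau, u.comm])
  exact DFunLike.congr_fun h t

/-- Retracts of objects with injective `φ` have injective `φ`. -/
theorem retract_inj {T₁ T₂ : RepObj A B M} (s : RepHom T₁ T₂) (r : RepHom T₂ T₁)
    (hf : ∀ x, r.f (s.f x) = x) (hg : ∀ y, r.g (s.g y) = y)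
    (h2 : Function.Injective T₂.φ) : Function.Injective T₁.φ := by
  rw [injective_iff_map_eq_zero] at h2 ⊢
  intro t ht
  have h1 : T₂.φ (T₁.td.map T₂.td s.g t) = 0 := by
    rw [← s.compat, ht, map_zero]
  have h3 := h2 _ h1
  have h4 := T₁.td.map_map_eq_id T₂.td s.g r.g hg t
  rw [h3, map_zero] at h4
  exact h4.symm

/-- Quotient tensor data: given `h : M⊗Y₁ → M⊗Y₂` induced by `g : Y₁ → Y₂`, the
quotient `M⊗Y₂ / im h` is a tensor product of `M` with `Y₂ / im g`. -/
noncomputable def quotTD {Y₁ Y₂ : Type u} [AddCommGroup Y₁] [Module B Y₁]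
    [AddCommGroup Y₂] [Module B Y₂] (g : Y₁ →ₗ[B] Y₂)
    (D₁ : TensorData A B M Y₁) (D₂ : TensorData A B M Y₂)
    (h : D₁.T →ₗ[A] D₂.T) (hτ : ∀ m y, h (D₁.τ m y) = D₂.τ m (g y)) :
    TensorData A B M (Y₂ ⧸ LinearMap.range g) := by
  set N := LinearMap.range h with hNdef
  set π := N.mkQ with hπdef
  have hmksurj : Function.Surjective
      (Submodule.Quotient.mk : Y₂ → Y₂ ⧸ LinearMap.range g) :=
    Submodule.Quotient.mk_surjective _
  set σ := Function.surjInv hmksurj with hσdef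
  have hσ : ∀ q, (Submodule.Quotient.mk (σ q) : Y₂ ⧸ LinearMap.range g) = q :=
    fun q => Function.surjInv_eq hmksurj q
  have key : ∀ (m : M) (u v : Y₂),
      (Submodule.Quotient.mk u : Y₂ ⧸ LinearMap.range g) = Submodule.Quotient.mk v →
      π (D₂.τ m u) = π (D₂.τ m v) := by
    intro m u v huv
    obtain ⟨y₁, hy₁⟩ := (Submodule.Quotient.eq _).mp huv
    have hsum : D₂.τ m u = D₂.τ m v + D₂.τ m (g y₁) := by
      rw [← D₂.add_right, hy₁]; congr 1; abel
    rw [hsum, map_add]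
    have h0 : π (D₂.τ m (g y₁)) = 0 := by
      rw [← hτ m y₁]
      exact (Submodule.Quotient.mk_eq_zero N).2 ⟨D₁.τ m y₁, rfl⟩
    rw [h0, add_zero]
  have keymk : ∀ (m : M) (u : Y₂),
      π (D₂.τ m (σ (Submodule.Quotient.mk u))) = π (D₂.τ m u) :=
    fun m u => key m _ u (hσ _)
  exact {
    T := D₂.T ⧸ N
    τ := fun m q => π (D₂.τ m (σ q))
    add_left := fun m m' q => by
      show π (D₂.τ (m + m') (σ q)) = π (D₂.τ m (σ q)) + π (D₂.τ m' (σ q))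
      rw [D₂.add_left, map_add]
    add_right := fun m q q' => by
      have h1 : (Submodule.Quotient.mk (σ q + σ q') : Y₂ ⧸ LinearMap.range g)
          = q + q' := by rw [Submodule.Quotient.mk_add, hσ, hσ]
      show π (D₂.τ m (σ (q + q'))) = π (D₂.τ m (σ q)) + π (D₂.τ m (σ q'))
      rw [key m (σ (q + q')) (σ q + σ q') (by rw [hσ, h1]), D₂.add_right, map_add]
    balanced := fun b m q => by
      have h1 : (Submodule.Quotient.mk (b • σ q) : Y₂ ⧸ LinearMap.range g)
          = b • q := by rw [Submodule.Quotient.mk_smul, hσ]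
      show π (D₂.τ (op b • m) (σ q)) = π (D₂.τ m (σ (b • q)))
      rw [D₂.balanced, key m (b • σ q) (σ (b • q)) (by rw [hσ, h1])]
    smul_left := fun a m q => by
      show π (D₂.τ (a • m) (σ q)) = a • π (D₂.τ m (σ q))
      rw [D₂.smul_left, map_smul]
    universal := by
      intro Z _ _ β hβ1 hβ2 hβ3 hβ4
      have hβ0 : ∀ m, β m 0 = 0 := by
        intro m
        have := hβ2 m 0 0
        rw [add_zero] at this
        exact (left_eq_add.mp this)
      obtain ⟨k₂, hk₂, hk₂u⟩ := D₂.universal Z (fun m y => β m (Submodule.Quotient.mk y))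
        (fun m m' y => by simp only [hβ1])
        (fun m y y' => by simp only [Submodule.Quotient.mk_add, hβ2])
        (fun b m y => by simp only [hβ3, Submodule.Quotient.mk_smul])
        (fun a m y => by simp only [hβ4])
      have hker : N ≤ LinearMap.ker k₂ := by
        have hc : k₂ ∘ₗ h = 0 := D₁.ext_lin _ _ (fun m y => by
          rw [LinearMap.comp_apply, hτ, hk₂, LinearMap.zero_apply]
          rw [show (Submodule.Quotient.mk (g y) : Y₂ ⧸ LinearMap.range g) = 0 from
            (Submodule.Quotient.mk_eq_zero _).2 ⟨y, rfl⟩, hβ0]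
        )
        rintro x ⟨t, rfl⟩
        rw [LinearMap.mem_ker]
        exact DFunLike.congr_fun hc t
      refine ⟨Submodule.liftQ N k₂ hker, fun m q => ?_, fun k hkp => ?_⟩
      · show Submodule.liftQ N k₂ hker (π (D₂.τ m (σ q))) = β m q
        rw [hπdef, Submodule.mkQ_apply, Submodule.liftQ_apply, hk₂, hσ]
      · have hcomp : k ∘ₗ N.mkQ = (Submodule.liftQ N k₂ hker) ∘ₗ N.mkQ :=
          D₂.ext_lin _ _ (fun m y => by
            have h1 : k (N.mkQ (D₂.τ m y)) = β m (Submodule.Quotient.mk y) := by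
              rw [show N.mkQ (D₂.τ m y) = π (D₂.τ m (σ (Submodule.Quotient.mk y))) from
                (keymk m y).symm]
              exact hkp m (Submodule.Quotient.mk y)
            rw [LinearMap.comp_apply, LinearMap.comp_apply, h1, Submodule.mkQ_apply,
              Submodule.liftQ_apply, hk₂])
        exact (LinearMap.cancel_right (Submodule.mkQ_surjective N)).mp hcomp }

theorem quotTD_tau {Y₁ Y₂ : Type u} [AddCommGroup Y₁] [Module B Y₁]
    [AddCommGroup Y₂] [Module B Y₂] (g : Y₁ →ₗ[B] Y₂)
    (D₁ : TensorData A B M Y₁) (D₂ : TensorData A B M Y₂)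
    (h : D₁.T →ₗ[A] D₂.T) (hτ : ∀ m y, h (D₁.τ m y) = D₂.τ m (g y))
    (m : M) (y : Y₂) :
    (quotTD g D₁ D₂ h hτ).τ m (Submodule.Quotient.mk y)
      = (LinearMap.range h).mkQ (D₂.τ m y) := by
  have key : ∀ (u v : Y₂),
      (Submodule.Quotient.mk u : Y₂ ⧸ LinearMap.range g) = Submodule.Quotient.mk v →
      (LinearMap.range h).mkQ (D₂.τ m u) = (LinearMap.range h).mkQ (D₂.τ m v) := by
    intro u v huv
    obtain ⟨y₁, hy₁⟩ := (Submodule.Quotient.eq _).mp huv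
    have hsum : D₂.τ m u = D₂.τ m v + D₂.τ m (g y₁) := by
      rw [← D₂.add_right, hy₁]; congr 1; abel
    rw [hsum, map_add]
    have h0 : (LinearMap.range h).mkQ (D₂.τ m (g y₁)) = 0 := by
      rw [← hτ m y₁]
      exact (Submodule.Quotient.mk_eq_zero _).2 ⟨D₁.τ m y₁, rfl⟩
    rw [h0, add_zero]
  exact key _ y (Function.surjInv_eq _ _)

/-- Let `A`, `B` be rings and `M` an `(A,B)`-bimodule.  The full subcategory
`𝓜(A-Mod, M, B-Mod)` of `Rep(A,M,B)`, consisting of all triples `(X,Y,φ)` with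
`φ : M ⊗_B Y → X` injective, is a resolving subcategory of `Rep(A,M,B)` if and only
if `M` is a flat right `B`-module. -/
theorem stmt15 :
    RepResolving (fun T : RepObj A B M => Function.Injective T.φ) ↔
      MIsFlat A B M := by
  constructor
  · -- resolving implies flat
    rintro ⟨-, -, -, hker⟩
    intro Y₁ Y₂ _ _ _ _ g hg D₁ D₂ h hτ
    let T₁ : RepObj A B M :=
      { X := ↥(LinearMap.range h), Y := Y₁, td := D₁, φ := h.rangeRestrict }
    let T₂ : RepObj A B M := { X := D₂.T, Y := Y₂, td := D₂, φ := LinearMap.id }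
    let T₃ : RepObj A B M :=
      { X := D₂.T ⧸ LinearMap.range h, Y := Y₂ ⧸ LinearMap.range g,
        td := quotTD g D₁ D₂ h hτ, φ := LinearMap.id }
    have S : RepSES T₁ T₂ T₃ :=
      { i := { f := (LinearMap.range h).subtype, g := g,
               comm := fun m y => by
                 show (LinearMap.range h).subtype (h.rangeRestrict (D₁.τ m y))
                    = LinearMap.id (D₂.τ m (g y))
                 simp [hτ] }
        p := { f := (LinearMap.range h).mkQ, g := (LinearMap.range g).mkQ,
               comm := fun m y => by
                 show (LinearMap.range h).mkQ (LinearMap.id (D₂.τ m y))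
                    = LinearMap.id ((quotTD g D₁ D₂ h hτ).τ m
                        ((LinearMap.range g).mkQ y))
                 simp only [LinearMap.id_apply, Submodule.mkQ_apply]
                 exact (quotTD_tau g D₁ D₂ h hτ m y).symm }
        inj_f := Submodule.injective_subtype _
        inj_g := hg
        surj_f := Submodule.mkQ_surjective _
        surj_g := Submodule.mkQ_surjective _
        exact_f := by rw [Submodule.range_subtype]; exact (Submodule.ker_mkQ _).symm
        exact_g := by rw [Submodule.ker_mkQ] }
    have h1 : Function.Injective T₁.φ :=
      hker T₁ T₂ T₃ S (fun a b hab => hab) (fun a b hab => hab)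
    intro t t' htt
    exact h1 (Subtype.ext htt)
  · -- flat implies resolving
    intro hflat
    refine ⟨?_, ?_, ?_, ?_⟩
    · -- projective objects
      intro T hproj
      let T' : RepObj A B M :=
        { X := T.X × T.td.T, Y := T.Y, td := T.td, φ := LinearMap.inr A T.X T.td.T }
      have hinr : Function.Injective T'.φ := fun a b hab => by
        exact congrArg Prod.snd hab
      let u : RepHom T' T :=
        { f := LinearMap.coprod LinearMap.id T.φ, g := LinearMap.id,
          comm := fun m y => by
            show LinearMap.coprod LinearMap.id T.φ
                (LinearMap.inr A T.X T.td.T (T.td.τ m y))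
              = T.φ (T.td.τ m (LinearMap.id y))
            simp }
      obtain ⟨h', hf, hg⟩ := hproj T' T u
        (fun x => ⟨(x, 0), by show LinearMap.coprod LinearMap.id T.φ (x, 0) = x; simp⟩) (fun y => ⟨y, rfl⟩)
        { f := LinearMap.id, g := LinearMap.id, comm := fun m y => rfl }
      exact retract_inj h' u (fun x => hf x) (fun y => hg y) hinr
    · -- closed under direct summands
      rintro T₁ T₂ hP2 ⟨s, r, hf, hg⟩
      exact retract_inj s r hf hg hP2
    · -- closed under extensions
      intro T₁ T₂ T₃ S h1 h3
      rw [injective_iff_map_eq_zero] at h1 h3 ⊢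
      intro t ht
      have hp : T₃.φ (T₂.td.map T₃.td S.p.g t) = 0 := by
        rw [← S.p.compat, ht, map_zero]
      have hp0 := h3 _ hp
      obtain ⟨t₁, ht₁⟩ := TensorData.middle_exact T₁.td T₂.td T₃.td S.i.g S.p.g
        S.surj_g S.exact_g hp0
      have hfi : S.i.f (T₁.φ t₁) = S.i.f 0 := by
        rw [map_zero, S.i.compat, ht₁, ht]
      have hφ1 := S.inj_f hfi
      rw [h1 _ hφ1, map_zero] at ht₁
      exact ht₁.symm
    · -- closed under kernels of epimorphisms
      intro T₁ T₂ T₃ S h2 h3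
      have hinj : Function.Injective (T₁.td.map T₂.td S.i.g) :=
        hflat T₁.Y T₂.Y S.i.g S.inj_g T₁.td T₂.td _
          (fun m y => T₁.td.map_tau T₂.td S.i.g m y)
      rw [injective_iff_map_eq_zero] at h2 ⊢
      intro t ht
      have hz : T₂.φ (T₁.td.map T₂.td S.i.g t) = 0 := by
        rw [← S.i.compat, ht, map_zero]
      have h0 := h2 _ hz
      exact hinj (by rw [h0, map_zero])

end Resolving
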